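/- Let a_n ∈ ℝ[x] be the coefficient of λⁿ in the key polynomial P_n(x,λ). Then a_{n+1}(x) = −x(x−1)·a_n′(x) + (−n+1/2)(1−2x)·a_n(x), and a_{n+1} ≠ 0 whenever a_n ≠ 0. -/

import Mathlib

open MvPolynomial

/-- The Legendre cubic `f(x,λ) = x(x-1)(x-λ)`, with `x = X 0` and `λ = X 1`. -/
noncomputable def legf : MvPolynomial (Fin 2) ℝ := X 0 * (X 0 - 1) * (X 0 - X 1)

/-- The key polynomials: `P 1 = (1/2)∂f/∂x`,
`P (n+1) = (∂P n/∂x)·f + (-n+1/2)·(P n)·(∂f/∂x)` for `n ≥ 1`. -/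
noncomputable def P : ℕ → MvPolynomial (Fin 2) ℝ
  | 0 => 1
  | 1 => C (1 / 2 : ℝ) * pderiv 0 legf
  | n + 2 =>
      pderiv 0 (P (n + 1)) * legf
        + C (1 / 2 - (n + 1 : ℝ)) * (P (n + 1) * pderiv 0 legf)



lemma coeff_pderiv' {σ : Type*} [DecidableEq σ] (i : σ) (p : MvPolynomial σ ℝ) (m : σ →₀ ℕ) :
    coeff m (pderiv i p) = (m i + 1) * coeff (m + Finsupp.single i 1) p := by
  induction p using MvPolynomial.induction_on' with
  | add p q hp hq => simp [hp, hq, mul_add]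
  | monomial s a =>
    rw [pderiv_monomial, coeff_monomial, coeff_monomial]
    by_cases hs : s i = 0
    · have h2 : s ≠ m + Finsupp.single i 1 := by
        intro h; rw [h] at hs; simp at hs
      rw [if_neg h2, hs]
      split_ifs <;> simp
    · have hle : Finsupp.single i 1 ≤ s := by
        rw [Finsupp.single_le_iff]; omega
      have key : s - Finsupp.single i 1 = m ↔ s = m + Finsupp.single i 1 := by
        constructor
        · intro h; rw [← h, tsub_add_cancel_of_le hle]
        · intro h; rw [h, add_tsub_cancel_right]
      split_ifs with h1 h2 h2
      · have : s i = m i + 1 := by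
          rw [h2]; simp
        rw [this]; push_cast; ring
      · exact absurd (key.mp h1) h2
      · exact absurd (key.mpr h2) h1
      · ring


lemma mono_eq (a b : ℕ) (r : ℝ) :
    (monomial (Finsupp.single (0 : Fin 2) a + Finsupp.single 1 b) r : MvPolynomial (Fin 2) ℝ)
      = C r * X 0 ^ a * X 1 ^ b := by
  rw [X_pow_eq_monomial, X_pow_eq_monomial, C_mul_monomial, monomial_mul]
  simp

lemma legf_eq : legf
    = monomial (Finsupp.single (0:Fin 2) 3 + Finsupp.single 1 0) 1
      - monomial (Finsupp.single (0:Fin 2) 2 + Finsupp.single 1 0) 1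
      - monomial (Finsupp.single (0:Fin 2) 2 + Finsupp.single 1 1) 1
      + monomial (Finsupp.single (0:Fin 2) 1 + Finsupp.single 1 1) 1 := by
  simp only [mono_eq, legf, map_one, map_ofNat]; ring

lemma pderiv_legf_eq : pderiv 0 legf
    = monomial (Finsupp.single (0:Fin 2) 2 + Finsupp.single 1 0) 3
      - monomial (Finsupp.single (0:Fin 2) 1 + Finsupp.single 1 0) 2
      - monomial (Finsupp.single (0:Fin 2) 1 + Finsupp.single 1 1) 2
      + monomial (Finsupp.single (0:Fin 2) 0 + Finsupp.single 1 1) 1 := by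
  have : pderiv (0 : Fin 2) legf = 3 * X 0 ^ 2 - 2 * X 0 - 2 * (X 0 * X 1) + X 1 := by
    simp only [legf]
    simp [pderiv_mul, pderiv_X, Pi.single_apply]
    ring
  rw [this]
  simp only [mono_eq, map_one, map_ofNat]
  ring

lemma fin2_apply0 (k n : ℕ) : (Finsupp.single (0:Fin 2) k + Finsupp.single 1 n : Fin 2 →₀ ℕ) 0 = k := by
  simp [Finsupp.single_apply]

lemma fin2_apply1 (k n : ℕ) : (Finsupp.single (0:Fin 2) k + Finsupp.single 1 n : Fin 2 →₀ ℕ) 1 = n := by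
  simp [Finsupp.single_apply]

lemma coeff_mul_mono (p : MvPolynomial (Fin 2) ℝ) (a b k n : ℕ) (r : ℝ) :
    coeff (Finsupp.single 0 k + Finsupp.single 1 n)
        (p * monomial (Finsupp.single 0 a + Finsupp.single 1 b) r)
      = if a ≤ k ∧ b ≤ n
          then coeff (Finsupp.single 0 (k-a) + Finsupp.single 1 (n-b)) p * r
          else 0 := by
  rw [coeff_mul_monomial']
  have hcond : (Finsupp.single (0:Fin 2) a + Finsupp.single 1 b
      ≤ Finsupp.single 0 k + Finsupp.single 1 n) ↔ (a ≤ k ∧ b ≤ n) := by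
    rw [Finsupp.le_def]
    constructor
    · intro h
      have h0 := h 0; have h1 := h 1
      rw [fin2_apply0, fin2_apply0] at h0
      rw [fin2_apply1, fin2_apply1] at h1
      exact ⟨h0, h1⟩
    · rintro ⟨h1, h2⟩ i
      fin_cases i <;> simp [Finsupp.single_apply] <;> omega
  have hsub : (Finsupp.single (0:Fin 2) k + Finsupp.single 1 n)
      - (Finsupp.single 0 a + Finsupp.single 1 b)
      = Finsupp.single 0 (k-a) + Finsupp.single 1 (n-b) := by
    ext i
    fin_cases i <;> simp [Finsupp.tsub_apply, Finsupp.single_apply]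
  simp only [hsub, hcond]

/-- λ-degree bound -/
def lbd (n : ℕ) (p : MvPolynomial (Fin 2) ℝ) : Prop :=
  ∀ m : Fin 2 →₀ ℕ, n < m 1 → coeff m p = 0

lemma lbd_mul {a b : ℕ} {p q : MvPolynomial (Fin 2) ℝ} (hp : lbd a p) (hq : lbd b q) :
    lbd (a + b) (p * q) := by
  intro m hm
  rw [coeff_mul]
  apply Finset.sum_eq_zero
  rintro ⟨u, v⟩ huv
  rw [Finset.HasAntidiagonal.mem_antidiagonal] at huv
  have : u 1 + v 1 = m 1 := by rw [← huv]; simp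
  rcases lt_or_ge a (u 1) with h | h
  · simp [hp u h]
  · have : b < v 1 := by omega
    simp [hq v this]

lemma lbd_mono_term (a b : ℕ) (r : ℝ) :
    lbd b (monomial (Finsupp.single (0:Fin 2) a + Finsupp.single 1 b) r) := by
  intro m hm
  rw [coeff_monomial]
  split_ifs with h
  · exfalso
    have := fin2_apply1 a b
    rw [h] at this
    omega
  · rfl

lemma lbd_add {n : ℕ} {p q : MvPolynomial (Fin 2) ℝ} (hp : lbd n p) (hq : lbd n q) :
    lbd n (p + q) := fun m hm => by simp [coeff_add, hp m hm, hq m hm]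

lemma lbd_neg {n : ℕ} {p : MvPolynomial (Fin 2) ℝ} (hp : lbd n p) : lbd n (-p) :=
  fun m hm => by simp [hp m hm]

lemma lbd_sub {n : ℕ} {p q : MvPolynomial (Fin 2) ℝ} (hp : lbd n p) (hq : lbd n q) :
    lbd n (p - q) := by rw [sub_eq_add_neg]; exact lbd_add hp (lbd_neg hq)

lemma lbd_C_mul {n : ℕ} {p : MvPolynomial (Fin 2) ℝ} (c : ℝ) (hp : lbd n p) :
    lbd n (C c * p) := fun m hm => by simp [coeff_C_mul, hp m hm]

lemma lbd_pderiv {n : ℕ} {p : MvPolynomial (Fin 2) ℝ} (hp : lbd n p) :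
    lbd n (pderiv 0 p) := by
  intro m hm
  rw [coeff_pderiv']
  have h1 : (m + Finsupp.single (0:Fin 2) 1 : Fin 2 →₀ ℕ) 1 = m 1 := by
    simp [Finsupp.single_apply]
  rw [hp _ (by omega), mul_zero]

lemma lbd_le {a b : ℕ} {p : MvPolynomial (Fin 2) ℝ} (h : a ≤ b) (hp : lbd a p) : lbd b p :=
  fun m hm => hp m (by omega)

lemma lbd_legf : lbd 1 legf := by
  rw [legf_eq]
  exact lbd_add (lbd_sub (lbd_sub (lbd_le (by norm_num) (lbd_mono_term 3 0 1))
    (lbd_le (by norm_num) (lbd_mono_term 2 0 1))) (lbd_mono_term 2 1 1)) (lbd_mono_term 1 1 1)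

lemma lbd_pderiv_legf : lbd 1 (pderiv 0 legf) := lbd_pderiv lbd_legf

lemma coeff_mono (a b k n : ℕ) (r : ℝ) :
    coeff (Finsupp.single 0 k + Finsupp.single 1 n)
        (monomial (Finsupp.single (0:Fin 2) a + Finsupp.single 1 b) r)
      = if a = k ∧ b = n then r else 0 := by
  rw [coeff_monomial]
  have h : ((Finsupp.single (0:Fin 2) a + Finsupp.single 1 b)
      = (Finsupp.single 0 k + Finsupp.single 1 n)) ↔ (a = k ∧ b = n) := by
    constructor
    · intro h
      constructor
      · have := congrArg (fun f => f 0) h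
        simpa [fin2_apply0] using this
      · have := congrArg (fun f => f 1) h
        simpa [fin2_apply1] using this
    · rintro ⟨rfl, rfl⟩; rfl
  simp only [h]

lemma lbd_P : ∀ n, lbd n (P n)
  | 0 => by
    intro m hm
    rw [show P 0 = 1 from rfl, coeff_one, if_neg]
    intro h
    rw [← h] at hm
    simp at hm
  | 1 => by
    rw [show P 1 = C (1/2 : ℝ) * pderiv 0 legf from rfl]
    exact lbd_C_mul _ lbd_pderiv_legf
  | (n+2) => by
    rw [show P (n+2) = pderiv 0 (P (n + 1)) * legf
        + C (1 / 2 - (n + 1 : ℝ)) * (P (n + 1) * pderiv 0 legf) from rfl]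
    have h1 : lbd (n+1+1) (pderiv 0 (P (n+1)) * legf) :=
      lbd_mul (lbd_pderiv (lbd_P (n+1))) lbd_legf
    have h2 : lbd (n+1+1) (C (1 / 2 - (n + 1 : ℝ)) * (P (n+1) * pderiv 0 legf)) :=
      lbd_C_mul _ (lbd_mul (lbd_P (n+1)) lbd_pderiv_legf)
    exact lbd_add h1 h2

open Polynomial in
/-- If `a n ∈ ℝ[x]` is the coefficient of `λ^n` in the key polynomial `P n`, then
`a (n+1) = -x(x-1)·(a n)' + (-n+1/2)(1-2x)·(a n)`, and `a (n+1) ≠ 0` whenever `a n ≠ 0`. -/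
theorem lambda_leadingCoeff_recursion (a : ℕ → Polynomial ℝ)
    (ha : ∀ n k : ℕ, (a n).coeff k
      = MvPolynomial.coeff (Finsupp.single 0 k + Finsupp.single 1 n) (P n)) :
    ∀ n : ℕ, 1 ≤ n →
      a (n + 1) = -(Polynomial.X * (Polynomial.X - 1)) * derivative (a n)
          + Polynomial.C (-(n : ℝ) + 1 / 2) * ((1 - 2 * Polynomial.X) * a n)
        ∧ (a n ≠ 0 → a (n + 1) ≠ 0) := by
  have key : ∀ n : ℕ, 1 ≤ n →
      a (n + 1) = -(Polynomial.X * (Polynomial.X - 1)) * derivative (a n)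
          + Polynomial.C (-(n : ℝ) + 1 / 2) * ((1 - 2 * Polynomial.X) * a n) := by
    intro n hn
    obtain ⟨m, rfl⟩ : ∃ m, n = m + 1 := ⟨n - 1, by omega⟩
    set q := P (m+1) with hqdef
    have hq : lbd (m+1) q := lbd_P (m+1)
    have hq' : lbd (m+1) (pderiv 0 q) := lbd_pderiv hq
    have hD : ∀ j : ℕ, coeff (Finsupp.single 0 j + Finsupp.single 1 (m+1)) (pderiv 0 q)
        = (derivative (a (m+1))).coeff j := by
      intro j
      rw [coeff_pderiv', fin2_apply0]
      have he : (Finsupp.single (0:Fin 2) j + Finsupp.single 1 (m+1)) + Finsupp.single 0 1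
          = Finsupp.single 0 (j+1) + Finsupp.single 1 (m+1) := by
        ext i
        fin_cases i <;> simp [Finsupp.single_apply]
      rw [he, ← ha, Polynomial.coeff_derivative]
      ring
    ext k
    rw [ha]
    rw [show P (m+1+1) = pderiv 0 q * legf
        + MvPolynomial.C (1 / 2 - (m + 1 : ℝ)) * (q * pderiv 0 legf) from rfl]
    rw [MvPolynomial.coeff_add, MvPolynomial.coeff_C_mul, pderiv_legf_eq, legf_eq]
    rw [show ∀ A B Cc D : MvPolynomial (Fin 2) ℝ, pderiv 0 q * (A - B - Cc + D)
        = pderiv 0 q * A - pderiv 0 q * B - pderiv 0 q * Cc + pderiv 0 q * D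
        from fun A B Cc D => by ring]
    rw [show ∀ A B Cc D : MvPolynomial (Fin 2) ℝ, q * (A - B - Cc + D)
        = q * A - q * B - q * Cc + q * D from fun A B Cc D => by ring]
    rw [MvPolynomial.coeff_add, MvPolynomial.coeff_sub, MvPolynomial.coeff_sub,
      MvPolynomial.coeff_add, MvPolynomial.coeff_sub, MvPolynomial.coeff_sub]
    rw [coeff_mul_mono, coeff_mul_mono, coeff_mul_mono, coeff_mul_mono,
      coeff_mul_mono, coeff_mul_mono, coeff_mul_mono, coeff_mul_mono]
    -- kill the λ-degree-(m+2) terms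
    have z1 : coeff (Finsupp.single 0 (k-3) + Finsupp.single 1 (m+1+1-0)) (pderiv 0 q) = 0 :=
      hq' _ (by rw [fin2_apply1]; omega)
    have z2 : coeff (Finsupp.single 0 (k-2) + Finsupp.single 1 (m+1+1-0)) (pderiv 0 q) = 0 :=
      hq' _ (by rw [fin2_apply1]; omega)
    have z3 : coeff (Finsupp.single 0 (k-2) + Finsupp.single 1 (m+1+1-0)) q = 0 :=
      hq _ (by rw [fin2_apply1]; omega)
    have z4 : coeff (Finsupp.single 0 (k-1) + Finsupp.single 1 (m+1+1-0)) q = 0 :=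
      hq _ (by rw [fin2_apply1]; omega)
    rw [z1, z2, z3, z4]
    have hs : (m+1+1-1 : ℕ) = m+1 := by omega
    rw [hs]
    rw [hD, hD]
    have hA1 : coeff (Finsupp.single 0 (k-1) + Finsupp.single 1 (m+1)) q
        = (a (m+1)).coeff (k-1) := (ha (m+1) (k-1)).symm
    have hA0 : coeff (Finsupp.single 0 (k-0) + Finsupp.single 1 (m+1)) q
        = (a (m+1)).coeff k := by rw [Nat.sub_zero]; exact (ha (m+1) k).symm
    rw [hA1, hA0]
    -- now the RHS
    have hrhs : -(Polynomial.X * (Polynomial.X - 1)) * derivative (a (m+1))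
          + Polynomial.C (-((m+1 : ℕ) : ℝ) + 1 / 2) * ((1 - 2 * Polynomial.X) * a (m+1))
        = derivative (a (m+1)) * Polynomial.X ^ 1
          - derivative (a (m+1)) * Polynomial.X ^ 2
          + (Polynomial.C (-((m+1 : ℕ) : ℝ) + 1 / 2) * a (m+1)
            - Polynomial.C (-((m+1 : ℕ) : ℝ) + 1 / 2)
              * (Polynomial.C (2:ℝ) * (a (m+1) * Polynomial.X ^ 1))) := by
      rw [show (Polynomial.C (2:ℝ)) = 2 from map_ofNat _ 2]
      ring
    rw [hrhs]
    rw [Polynomial.coeff_add, Polynomial.coeff_sub, Polynomial.coeff_sub,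
      Polynomial.coeff_mul_X_pow', Polynomial.coeff_mul_X_pow',
      Polynomial.coeff_C_mul, Polynomial.coeff_C_mul, Polynomial.coeff_C_mul,
      Polynomial.coeff_mul_X_pow']
    have c1 : ((1:ℕ) ≤ m+1+1) := by omega
    simp only [Nat.sub_zero, Nat.le_zero, zero_le, true_and, and_true, c1, if_true, mul_one]
    split_ifs <;> push_cast <;> ring
  intro n hn
  refine ⟨key n hn, fun _ => ?_⟩
  -- show the constant coefficient of `a n` is nonzero for all `n ≥ 1`
  have hc : ∀ n : ℕ, 1 ≤ n → (a n).coeff 0 ≠ 0 := by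
    intro n hn
    induction n with
    | zero => omega
    | succ m ih =>
      rcases Nat.eq_or_lt_of_le hn with h1 | h1
      · -- m + 1 = 1
        have hm : m = 0 := by omega
        subst hm
        rw [ha]
        rw [show P 1 = MvPolynomial.C (1/2 : ℝ) * pderiv 0 legf from rfl]
        rw [MvPolynomial.coeff_C_mul, pderiv_legf_eq, MvPolynomial.coeff_add,
          MvPolynomial.coeff_sub, MvPolynomial.coeff_sub,
          coeff_mono, coeff_mono, coeff_mono, coeff_mono]
        norm_num
      · have hm : 1 ≤ m := by omega
        have hne : (-(m:ℝ) + 1/2) ≠ 0 := by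
          have : (1:ℝ) ≤ (m:ℝ) := by exact_mod_cast hm
          intro h; nlinarith
        have e : (a (m+1)).coeff 0 = (-(m:ℝ) + 1/2) * (a m).coeff 0 := by
          rw [key m hm]
          simp [Polynomial.mul_coeff_zero]
        rw [e]
        exact mul_ne_zero hne (ih hm)
  have h1 : (a (n+1)).coeff 0 ≠ 0 := hc (n+1) (by omega)
  intro h0
  rw [h0] at h1
  simp at h1
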